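/- Let S consist of 2n points given as n pairs {p_i, q_i} in a metric space, let T be a minimum spanning tree of S, let h be a maximum-weight edge of T, and let H_1, H_2 be the vertex sets of the two components of T after removing h. If neither H_1 nor H_2 contains both points of any pair, then the coloring R = H_1, B = H_2 is feasible and minimizes max(btCost(R'), btCost(B')) over all feasible colorings S = R' ∪ B'. -/

import Mathlib

set_option linter.unusedSectionVars false

variable {α : Type*} [MetricSpace α] [DecidableEq α]

/-- Two points are connected via the edge set `E` (edges usable in both directions). -/
def EdgeConn (E : Finset (α × α)) (x y : α) : Prop :=
  Relation.ReflTransGen (fun a b => (a, b) ∈ E ∨ (b, a) ∈ E) x y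

/-- `E` is (the edge set of) a spanning tree of the complete graph on the finite
point set `X`. -/
def IsSpanningTreeOn (X : Finset α) (E : Finset (α × α)) : Prop :=
  (∀ e ∈ E, e.1 ∈ X ∧ e.2 ∈ X) ∧ E.card + 1 = X.card ∧
    ∀ x ∈ X, ∀ y ∈ X, EdgeConn E x y

/-- The bottleneck spanning tree cost of `X`: the least `c ≥ 0` such that some
spanning tree on `X` has all edge lengths at most `c`. -/
noncomputable def btCost (X : Finset α) : ℝ :=
  sInf {c | 0 ≤ c ∧ ∃ E : Finset (α × α), IsSpanningTreeOn X E ∧ ∀ e ∈ E, dist e.1 e.2 ≤ c}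

lemma EdgeConn.trans {E : Finset (α × α)} {x y z : α} (h1 : EdgeConn E x y)
    (h2 : EdgeConn E y z) : EdgeConn E x z := Relation.ReflTransGen.trans h1 h2

lemma EdgeConn.symm {E : Finset (α × α)} {x y : α} (h1 : EdgeConn E x y) :
    EdgeConn E y x := by
  haveI : Std.Symm (fun a b : α => (a, b) ∈ E ∨ (b, a) ∈ E) := ⟨fun a b hab => hab.symm⟩
  exact Relation.ReflTransGen.stdSymm.symm _ _ h1

lemma EdgeConn.rfl {E : Finset (α × α)} {x : α} : EdgeConn E x x := Relation.ReflTransGen.refl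

lemma edgeConn_single {E : Finset (α × α)} {e : α × α} (he : e ∈ E) :
    EdgeConn E e.1 e.2 := Relation.ReflTransGen.single (Or.inl he)

lemma edgeConn_mono {E F : Finset (α × α)} (hEF : E ⊆ F) {x y : α}
    (h : EdgeConn E x y) : EdgeConn F x y := by
  induction h with
  | refl => exact .refl
  | tail hab hbc ih => exact ih.tail (hbc.imp (fun q => hEF q) (fun q => hEF q))

lemma edgeConn_empty {x y : α} (h : EdgeConn (∅ : Finset (α × α)) x y) : x = y := by
  induction h with
  | refl => rfl
  | tail hab hbc ih => simp at hbc

/-- A path from inside `A` to outside `A` crosses the boundary of `A`. -/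
lemma edgeConn_crossing {E : Finset (α × α)} {A : Finset α} {x y : α}
    (h : EdgeConn E x y) (hx : x ∈ A) (hy : y ∉ A) :
    ∃ e ∈ E, (e.1 ∈ A ∧ e.2 ∉ A) ∨ (e.2 ∈ A ∧ e.1 ∉ A) := by
  induction h with
  | refl => exact absurd hx hy
  | @tail b c hab hbc ih =>
    by_cases hb : b ∈ A
    · rcases hbc with hbc | hbc
      · exact ⟨(b, c), hbc, Or.inl ⟨hb, hy⟩⟩
      · exact ⟨(c, b), hbc, Or.inr ⟨hb, hy⟩⟩
    · exact ih hb

/-- If every edge stays within one side, paths starting in `A` stay in `A`. -/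
lemma edgeConn_stay {E : Finset (α × α)} {A : Finset α}
    (hsame : ∀ e ∈ E, (e.1 ∈ A ↔ e.2 ∈ A)) {x y : α}
    (h : EdgeConn E x y) (hx : x ∈ A) :
    EdgeConn (E.filter (fun e => e.1 ∈ A ∧ e.2 ∈ A)) x y := by
  induction h using Relation.ReflTransGen.head_induction_on with
  | refl => exact .refl
  | @head a b hab hby ih =>
    rcases hab with hab | hab
    · have hbA : b ∈ A := (hsame _ hab).1 hx
      exact Relation.ReflTransGen.head
        (Or.inl (Finset.mem_filter.2 ⟨hab, hx, hbA⟩)) (ih hbA)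
    · have hbA : b ∈ A := (hsame _ hab).2 hx
      exact Relation.ReflTransGen.head
        (Or.inr (Finset.mem_filter.2 ⟨hab, hbA, hx⟩)) (ih hbA)

/-- Removing one edge: connectivity decomposes. -/
lemma edgeConn_erase {E : Finset (α × α)} (e : α × α) {z w : α}
    (h : EdgeConn E z w) :
    EdgeConn (E.erase e) z w ∨
    (EdgeConn (E.erase e) z e.1 ∧ EdgeConn (E.erase e) e.2 w) ∨
    (EdgeConn (E.erase e) z e.2 ∧ EdgeConn (E.erase e) e.1 w) := by
  obtain ⟨e1, e2⟩ := e
  induction h with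
  | refl => exact Or.inl .refl
  | @tail b c hzb hbc ih =>
    by_cases hbe : ((b, c) = (e1, e2)) ∨ ((c, b) = (e1, e2))
    · rcases hbe with hbe | hbe
      · obtain ⟨rfl, rfl⟩ := Prod.mk.injEq .. ▸ Prod.ext_iff.1 hbe
        rcases ih with h1 | ⟨h1, h2⟩ | ⟨h1, h2⟩
        · exact Or.inr (Or.inl ⟨h1, .rfl⟩)
        · exact Or.inr (Or.inl ⟨h1, .rfl⟩)
        · exact Or.inl h1
      · obtain ⟨rfl, rfl⟩ := Prod.mk.injEq .. ▸ Prod.ext_iff.1 hbe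
        rcases ih with h1 | ⟨h1, h2⟩ | ⟨h1, h2⟩
        · exact Or.inr (Or.inr ⟨h1, .rfl⟩)
        · exact Or.inl h1
        · exact Or.inr (Or.inr ⟨h1, .rfl⟩)
    · push_neg at hbe
      have hstep : EdgeConn (E.erase (e1, e2)) b c := by
        rcases hbc with hbc | hbc
        · exact Relation.ReflTransGen.single
            (Or.inl (Finset.mem_erase.2 ⟨hbe.1, hbc⟩))
        · exact Relation.ReflTransGen.single
            (Or.inr (Finset.mem_erase.2 ⟨hbe.2, hbc⟩))
      rcases ih with h1 | ⟨h1, h2⟩ | ⟨h1, h2⟩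
      · exact Or.inl (h1.trans hstep)
      · exact Or.inr (Or.inl ⟨h1, h2.trans hstep⟩)
      · exact Or.inr (Or.inr ⟨h1, h2.trans hstep⟩)

/-- The connectivity setoid on a finite vertex set. -/
def conSetoid (E : Finset (α × α)) (X : Finset α) : Setoid {x // x ∈ X} :=
  ⟨fun a b => EdgeConn E ↑a ↑b, fun _ => .rfl, EdgeConn.symm, EdgeConn.trans⟩

lemma quot_card_bound (E : Finset (α × α)) (X : Finset α) :
    X.card ≤ Nat.card (Quotient (conSetoid E X)) + E.card := by
  classical
  induction E using Finset.induction with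
  | empty =>
      rw [Finset.card_empty, Nat.add_zero, ← Nat.card_eq_finsetCard]
      refine Nat.card_le_card_of_injective (Quotient.mk (conSetoid ∅ X)) ?_
      intro a b hab
      exact Subtype.ext (edgeConn_empty (Quotient.exact hab))
  | @insert e E' he ih =>
      refine ih.trans ?_
      rw [Finset.card_insert_of_notMem he]
      have key : Nat.card (Quotient (conSetoid E' X)) ≤
          Nat.card (Quotient (conSetoid (insert e E') X)) + 1 := by
        have hcard : Nat.card (Option (Quotient (conSetoid (insert e E') X))) =
            Nat.card (Quotient (conSetoid (insert e E') X)) + 1 := by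
          letI : DecidableEq (Quotient (conSetoid (insert e E') X)) := Classical.decEq _
          rw [Nat.card_eq_fintype_card, Nat.card_eq_fintype_card, Fintype.card_option]
        rw [← hcard]
        refine Nat.card_le_card_of_injective
          (Quotient.lift
            (fun a => if EdgeConn E' ↑a e.1
              then (none : Option (Quotient (conSetoid (insert e E') X)))
              else some (Quotient.mk _ a)) ?_) ?_
        · intro a b hab
          by_cases h1 : EdgeConn E' ↑a e.1
          · rw [if_pos h1, if_pos (EdgeConn.trans (EdgeConn.symm hab) h1)]
          · rw [if_neg h1, if_neg (fun hb => h1 (EdgeConn.trans hab hb))]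
            exact congrArg _ (Quotient.sound (edgeConn_mono (Finset.subset_insert _ _) hab))
        · refine Quotient.ind fun a => Quotient.ind fun b => fun hab => ?_
          rw [Quotient.lift_mk, Quotient.lift_mk] at hab
          by_cases h1 : EdgeConn E' ↑a e.1 <;> by_cases h2 : EdgeConn E' ↑b e.1
          · exact Quotient.sound (h1.trans h2.symm)
          · rw [if_pos h1, if_neg h2] at hab; exact absurd hab (by simp)
          · rw [if_neg h1, if_pos h2] at hab; exact absurd hab (by simp)
          · rw [if_neg h1, if_neg h2, Option.some_inj] at hab
            have hc : EdgeConn (insert e E') (↑a : α) ↑b := Quotient.exact hab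
            have hdec := edgeConn_erase e hc
            rw [Finset.erase_insert he] at hdec
            rcases hdec with hd | ⟨hd1, hd2⟩ | ⟨hd1, hd2⟩
            · exact Quotient.sound hd
            · exact absurd hd1 h1
            · exact absurd hd2.symm h2
      omega

/-- A connected vertex set has at most `E.card + 1` vertices. -/
lemma card_le_of_edgeConn {E : Finset (α × α)} {X : Finset α}
    (hX : X.Nonempty)
    (hconn : ∀ x ∈ X, ∀ y ∈ X, EdgeConn E x y) :
    X.card ≤ E.card + 1 := by
  have hb := quot_card_bound E X
  have hsub : Subsingleton (Quotient (conSetoid E X)) := by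
    constructor
    refine Quotient.ind fun a => Quotient.ind fun b => ?_
    exact Quotient.sound (hconn _ a.2 _ b.2)
  obtain ⟨r, hr⟩ := hX
  haveI : Nonempty (Quotient (conSetoid E X)) := ⟨Quotient.mk _ ⟨r, hr⟩⟩
  haveI := hsub
  haveI : Unique (Quotient (conSetoid E X)) := uniqueOfSubsingleton (Classical.arbitrary _)
  rw [Nat.card_unique] at hb
  omega

/-- The star over a chosen root is a spanning tree. -/
lemma exists_spanningTree {X : Finset α} (hX : X.Nonempty) :
    ∃ E, IsSpanningTreeOn X E := by
  obtain ⟨r, hr⟩ := hX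
  refine ⟨(X.erase r).image (fun x => (r, x)), ?_, ?_, ?_⟩
  · intro e he
    simp only [Finset.mem_image] at he
    obtain ⟨x, hx, rfl⟩ := he
    exact ⟨hr, Finset.mem_of_mem_erase hx⟩
  · rw [Finset.card_image_of_injective _ (fun a b hab => (Prod.ext_iff.1 hab).2),
      Finset.card_erase_add_one hr]
  · have key : ∀ x ∈ X, EdgeConn ((X.erase r).image (fun x => (r, x))) r x := by
      intro x hx
      by_cases hxr : x = r
      · subst hxr; exact .rfl
      · exact Relation.ReflTransGen.single
          (Or.inl (Finset.mem_image_of_mem _ (Finset.mem_erase.2 ⟨hxr, hx⟩)))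
    intro x hx y hy
    exact (key x hx).symm.trans (key y hy)

lemma btCost_le {X : Finset α} {E : Finset (α × α)} {c : ℝ} (hc : 0 ≤ c)
    (hE : IsSpanningTreeOn X E) (hd : ∀ e ∈ E, dist e.1 e.2 ≤ c) :
    btCost X ≤ c :=
  csInf_le ⟨0, fun _ hb => hb.1⟩ ⟨hc, E, hE, hd⟩

/-- `btCost` is attained by some spanning tree, and is nonnegative. -/
lemma btCost_spec {X : Finset α} (hX : X.Nonempty) :
    0 ≤ btCost X ∧ ∃ E, IsSpanningTreeOn X E ∧ ∀ e ∈ E, dist e.1 e.2 ≤ btCost X := by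
  classical
  set m : Finset (α × α) → ℝ :=
    fun E => (insert (0:ℝ) (E.image fun e => dist e.1 e.2)).max' (Finset.insert_nonempty _ _)
    with hm
  have hm0 : ∀ E, 0 ≤ m E := fun E =>
    Finset.le_max' _ _ (Finset.mem_insert_self _ _)
  have hmE : ∀ E, ∀ e ∈ E, dist e.1 e.2 ≤ m E := by
    intro E e he
    exact Finset.le_max' (insert (0:ℝ) (E.image fun e => dist e.1 e.2)) _
      (Finset.mem_insert_of_mem (Finset.mem_image.2 ⟨e, he, rfl⟩))
  have hmle : ∀ E (c : ℝ), 0 ≤ c → (∀ e ∈ E, dist e.1 e.2 ≤ c) → m E ≤ c := by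
    intro E c hc hd
    refine Finset.max'_le _ _ _ ?_
    intro y hy
    rcases Finset.mem_insert.1 hy with rfl | hy
    · exact hc
    · obtain ⟨e, he, rfl⟩ := Finset.mem_image.1 hy
      exact hd e he
  set V : Finset (Finset (α × α)) :=
    ((X ×ˢ X).powerset).filter (fun E => IsSpanningTreeOn X E) with hV
  have hmemV : ∀ E, IsSpanningTreeOn X E → E ∈ V := by
    intro E hE
    refine Finset.mem_filter.2 ⟨Finset.mem_powerset.2 ?_, hE⟩
    intro e he
    exact Finset.mem_product.2 (hE.1 e he)
  obtain ⟨E₀, hE₀⟩ := exists_spanningTree hX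
  have hVne : (V.image m).Nonempty := ⟨m E₀, Finset.mem_image_of_mem _ (hmemV _ hE₀)⟩
  set M := (V.image m).min' hVne with hM
  obtain ⟨E₁, hE₁V, hE₁M⟩ := Finset.mem_image.1 ((V.image m).min'_mem hVne)
  rw [← hM] at hE₁M
  have hE₁ : IsSpanningTreeOn X E₁ := (Finset.mem_filter.1 hE₁V).2
  have hMA : M ∈ {c | 0 ≤ c ∧
      ∃ E : Finset (α × α), IsSpanningTreeOn X E ∧ ∀ e ∈ E, dist e.1 e.2 ≤ c} :=
    ⟨hE₁M ▸ hm0 E₁, E₁, hE₁, fun e he => hE₁M ▸ hmE E₁ e he⟩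
  have hlb : ∀ c ∈ {c | 0 ≤ c ∧
      ∃ E : Finset (α × α), IsSpanningTreeOn X E ∧ ∀ e ∈ E, dist e.1 e.2 ≤ c}, M ≤ c := by
    rintro c ⟨hc0, E, hE, hd⟩
    exact le_trans (Finset.min'_le _ _ (Finset.mem_image_of_mem _ (hmemV _ hE))) (hmle E c hc0 hd)
  have : btCost X = M := le_antisymm (csInf_le ⟨M, hlb⟩ hMA) (le_csInf ⟨M, hMA⟩ hlb)
  rw [this]
  exact ⟨hMA.1, hMA.2⟩

theorem bottleneck_component_coloring_optimal
    (n : ℕ) (hn : 1 ≤ n)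
    (pts : Fin n × Bool → α) (hinj : Function.Injective pts)
    (S : Finset α) (hS : S = Finset.image pts Finset.univ)
    (T : Finset (α × α)) (hT : IsSpanningTreeOn S T)
    (hTmin : ∀ E : Finset (α × α), IsSpanningTreeOn S E →
      (∑ e ∈ T, dist e.1 e.2) ≤ ∑ e ∈ E, dist e.1 e.2)
    (h : α × α) (hh : h ∈ T) (hmax : ∀ e ∈ T, dist e.1 e.2 ≤ dist h.1 h.2)
    (H₁ H₂ : Finset α) (hpart : H₁ ∪ H₂ = S) (hdisj : Disjoint H₁ H₂)
    (hne1 : H₁.Nonempty) (hne2 : H₂.Nonempty)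
    (hcomp : ∀ x ∈ S, ∀ y ∈ S,
      EdgeConn (T.erase h) x y ↔ ((x ∈ H₁ ∧ y ∈ H₁) ∨ (x ∈ H₂ ∧ y ∈ H₂)))
    (hnopairH₁ : ∀ i : Fin n, ¬ (pts (i, false) ∈ H₁ ∧ pts (i, true) ∈ H₁))
    (hnopairH₂ : ∀ i : Fin n, ¬ (pts (i, false) ∈ H₂ ∧ pts (i, true) ∈ H₂)) :
    (∃ σ : Fin n → Bool,
      H₁ = Finset.image (fun i => pts (i, σ i)) Finset.univ ∧
      H₂ = Finset.image (fun i => pts (i, !(σ i))) Finset.univ) ∧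
    ∀ σ : Fin n → Bool,
      max (btCost H₁) (btCost H₂) ≤
        max (btCost (Finset.image (fun i => pts (i, σ i)) Finset.univ))
            (btCost (Finset.image (fun i => pts (i, !(σ i))) Finset.univ)) := by
  classical
  have hSmem : ∀ i b, pts (i, b) ∈ S := by
    intro i b; rw [hS]; exact Finset.mem_image_of_mem _ (Finset.mem_univ _)
  have hmem12 : ∀ x ∈ S, x ∈ H₁ ∨ x ∈ H₂ := fun x hx => Finset.mem_union.1 (hpart ▸ hx)
  have hnot12 : ∀ x, x ∈ H₁ → x ∈ H₂ → False :=
    fun x h1 h2 => Finset.disjoint_left.1 hdisj h1 h2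
  have hH1S : H₁ ⊆ S := hpart ▸ Finset.subset_union_left
  have hH2S : H₂ ⊆ S := hpart ▸ Finset.subset_union_right
  have hbool : ∀ (b c : Bool), b ≠ c → b = !c := by decide
  -- the canonical coloring τ
  set τ : Fin n → Bool := fun i => decide (pts (i, true) ∈ H₁) with hτ
  have hkey : ∀ i, pts (i, τ i) ∈ H₁ ∧ pts (i, !(τ i)) ∈ H₂ := by
    intro i
    by_cases ht : pts (i, true) ∈ H₁
    · have hti : τ i = true := by simp [hτ, ht]
      rw [hti]
      have hf : pts (i, false) ∉ H₁ := fun hf => hnopairH₁ i ⟨hf, ht⟩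
      have hf2 : pts (i, false) ∈ H₂ := (hmem12 _ (hSmem i false)).resolve_left hf
      simp only [Bool.not_true]
      exact ⟨ht, hf2⟩
    · have hti : τ i = false := by simp [hτ, ht]
      rw [hti]
      have hT2 : pts (i, true) ∈ H₂ := (hmem12 _ (hSmem i true)).resolve_left ht
      have hf : pts (i, false) ∉ H₂ := fun hf => hnopairH₂ i ⟨hf, hT2⟩
      have hf1 : pts (i, false) ∈ H₁ := (hmem12 _ (hSmem i false)).resolve_right hf
      simp only [Bool.not_false]
      exact ⟨hf1, hT2⟩
  have hH1eq : H₁ = Finset.image (fun i => pts (i, τ i)) Finset.univ := by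
    ext x
    simp only [Finset.mem_image, Finset.mem_univ, true_and]
    constructor
    · intro hx
      obtain ⟨⟨i, b⟩, _, rfl⟩ := Finset.mem_image.1 (hS ▸ hH1S hx)
      refine ⟨i, ?_⟩
      by_cases hbt : b = τ i
      · rw [hbt]
      · exfalso
        rw [hbool b (τ i) hbt] at hx
        exact hnot12 _ hx (hkey i).2
    · rintro ⟨i, rfl⟩; exact (hkey i).1
  have hH2eq : H₂ = Finset.image (fun i => pts (i, !(τ i))) Finset.univ := by
    ext x
    simp only [Finset.mem_image, Finset.mem_univ, true_and]
    constructor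
    · intro hx
      obtain ⟨⟨i, b⟩, _, rfl⟩ := Finset.mem_image.1 (hS ▸ hH2S hx)
      refine ⟨i, ?_⟩
      by_cases hbt : b = !(τ i)
      · rw [hbt]
      · exfalso
        have hb2 : b = τ i := by
          have := hbool b (!(τ i)) hbt
          rwa [Bool.not_not] at this
        rw [hb2] at hx
        exact hnot12 _ (hkey i).1 hx
    · rintro ⟨i, rfl⟩; exact (hkey i).2
  -- the cut property
  have hcut : ∀ x ∈ H₁, ∀ y ∈ H₂, dist h.1 h.2 ≤ dist x y := by
    intro x hx y hy
    by_contra hlt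
    push_neg at hlt
    have hxy_not : (x, y) ∉ T.erase h := by
      intro hmem
      have hc := (hcomp x (hH1S hx) y (hH2S hy)).1
        (Relation.ReflTransGen.single (Or.inl hmem))
      rcases hc with ⟨_, hy1⟩ | ⟨hx2, _⟩
      · exact hnot12 _ hy1 hy
      · exact hnot12 _ hx hx2
    set T' := insert (x, y) (T.erase h) with hT'
    have hconnS : ∀ a ∈ S, EdgeConn T' a x := by
      intro a ha
      rcases hmem12 a ha with ha1 | ha2
      · exact edgeConn_mono (Finset.subset_insert _ _)
          ((hcomp a ha x (hH1S hx)).2 (Or.inl ⟨ha1, hx⟩))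
      · have h1 : EdgeConn T' a y := edgeConn_mono (Finset.subset_insert _ _)
          ((hcomp a ha y (hH2S hy)).2 (Or.inr ⟨ha2, hy⟩))
        exact h1.trans (Relation.ReflTransGen.single (Or.inr (Finset.mem_insert_self _ _)))
    have hT'span : IsSpanningTreeOn S T' := by
      refine ⟨?_, ?_, ?_⟩
      · intro e he
        rcases Finset.mem_insert.1 he with rfl | he
        · exact ⟨hH1S hx, hH2S hy⟩
        · exact hT.1 e (Finset.mem_of_mem_erase he)
      · rw [hT', Finset.card_insert_of_notMem hxy_not, Finset.card_erase_of_mem hh]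
        have h1 := hT.2.1
        have hTpos : 1 ≤ T.card := Finset.card_pos.2 ⟨h, hh⟩
        omega
      · intro a ha b hb
        exact (hconnS a ha).trans (hconnS b hb).symm
    have hsum := hTmin T' hT'span
    rw [hT', Finset.sum_insert hxy_not] at hsum
    have herase : ∑ e ∈ T.erase h, dist e.1 e.2 =
        (∑ e ∈ T, dist e.1 e.2) - dist h.1 h.2 := by
      rw [← Finset.sum_erase_add T _ hh]; ring
    rw [herase] at hsum
    linarith
  -- spanning trees on the two components
  have hsame : ∀ e ∈ T.erase h, (e.1 ∈ H₁ ∧ e.2 ∈ H₁) ∨ (e.1 ∈ H₂ ∧ e.2 ∈ H₂) := by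
    intro e he
    have hes := hT.1 e (Finset.mem_of_mem_erase he)
    exact (hcomp e.1 hes.1 e.2 hes.2).1 (edgeConn_single he)
  have hsame1 : ∀ e ∈ T.erase h, (e.1 ∈ H₁ ↔ e.2 ∈ H₁) := by
    intro e he
    rcases hsame e he with ⟨h1, h2⟩ | ⟨h1, h2⟩
    · exact ⟨fun _ => h2, fun _ => h1⟩
    · exact ⟨fun hx => absurd h1 (fun q => hnot12 _ hx q),
        fun hx => absurd h2 (fun q => hnot12 _ hx q)⟩
  have hsame2 : ∀ e ∈ T.erase h, (e.1 ∈ H₂ ↔ e.2 ∈ H₂) := by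
    intro e he
    rcases hsame e he with ⟨h1, h2⟩ | ⟨h1, h2⟩
    · exact ⟨fun hx => absurd hx (fun q => hnot12 _ h1 q),
        fun hx => absurd hx (fun q => hnot12 _ h2 q)⟩
    · exact ⟨fun _ => h2, fun _ => h1⟩
  set E₁ := (T.erase h).filter (fun e => e.1 ∈ H₁ ∧ e.2 ∈ H₁) with hE₁def
  set E₂ := (T.erase h).filter (fun e => e.1 ∈ H₂ ∧ e.2 ∈ H₂) with hE₂def
  have hconn1 : ∀ x ∈ H₁, ∀ y ∈ H₁, EdgeConn E₁ x y := by
    intro x hx y hy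
    exact edgeConn_stay hsame1
      ((hcomp x (hH1S hx) y (hH1S hy)).2 (Or.inl ⟨hx, hy⟩)) hx
  have hconn2 : ∀ x ∈ H₂, ∀ y ∈ H₂, EdgeConn E₂ x y := by
    intro x hx y hy
    exact edgeConn_stay hsame2
      ((hcomp x (hH2S hx) y (hH2S hy)).2 (Or.inr ⟨hx, hy⟩)) hx
  have hcard1 : H₁.card ≤ E₁.card + 1 := card_le_of_edgeConn hne1 hconn1
  have hcard2 : H₂.card ≤ E₂.card + 1 := card_le_of_edgeConn hne2 hconn2
  have hunion : E₁ ∪ E₂ = T.erase h := by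
    ext e
    simp only [hE₁def, hE₂def, Finset.mem_union, Finset.mem_filter]
    constructor
    · rintro (⟨he, _⟩ | ⟨he, _⟩) <;> exact he
    · intro he
      rcases hsame e he with h1 | h2
      · exact Or.inl ⟨he, h1⟩
      · exact Or.inr ⟨he, h2⟩
  have hdisjE : Disjoint E₁ E₂ := by
    rw [Finset.disjoint_left]
    intro e he1 he2
    exact hnot12 e.1 (Finset.mem_filter.1 he1).2.1 (Finset.mem_filter.1 he2).2.1
  have hcardsum : E₁.card + E₂.card = (T.erase h).card := by
    rw [← Finset.card_union_of_disjoint hdisjE, hunion]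
  have hScard : S.card = H₁.card + H₂.card := by
    rw [← hpart, Finset.card_union_of_disjoint hdisj]
  have hTe : (T.erase h).card + 1 = T.card := Finset.card_erase_add_one hh
  have hTcard := hT.2.1
  have he1card : E₁.card + 1 = H₁.card := by omega
  have he2card : E₂.card + 1 = H₂.card := by omega
  have hspan1 : IsSpanningTreeOn H₁ E₁ :=
    ⟨fun e he => (Finset.mem_filter.1 he).2, he1card, hconn1⟩
  have hspan2 : IsSpanningTreeOn H₂ E₂ :=
    ⟨fun e he => (Finset.mem_filter.1 he).2, he2card, hconn2⟩
  have hbt1 : btCost H₁ ≤ dist h.1 h.2 :=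
    btCost_le dist_nonneg hspan1
      (fun e he => hmax e (Finset.mem_of_mem_erase (Finset.mem_filter.1 he).1))
  have hbt2 : btCost H₂ ≤ dist h.1 h.2 :=
    btCost_le dist_nonneg hspan2
      (fun e he => hmax e (Finset.mem_of_mem_erase (Finset.mem_filter.1 he).1))
  refine ⟨⟨τ, hH1eq, hH2eq⟩, ?_⟩
  intro σ
  set R := Finset.image (fun i => pts (i, σ i)) Finset.univ with hR
  set B := Finset.image (fun i => pts (i, !(σ i))) Finset.univ with hB
  have hRne : R.Nonempty :=
    ⟨pts (⟨0, hn⟩, σ ⟨0, hn⟩), Finset.mem_image_of_mem _ (Finset.mem_univ _)⟩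
  have hRS : R ⊆ S := by
    intro x hx
    obtain ⟨i, _, rfl⟩ := Finset.mem_image.1 hx
    exact hSmem i (σ i)
  obtain ⟨hbtR0, TR, hTRspan, hTRd⟩ := btCost_spec hRne
  by_cases hcase : (∃ a ∈ R, a ∈ H₁) ∧ (∃ b ∈ R, b ∈ H₂)
  · obtain ⟨⟨a, haR, haH⟩, ⟨b, hbR, hbH⟩⟩ := hcase
    have hconnab : EdgeConn TR a b := hTRspan.2.2 a haR b hbR
    have hbnot : b ∉ H₁ := fun hb => hnot12 b hb hbH
    obtain ⟨e, heTR, hcross⟩ := edgeConn_crossing hconnab haH hbnot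
    have heR := hTRspan.1 e heTR
    have hdh : dist h.1 h.2 ≤ dist e.1 e.2 := by
      rcases hcross with ⟨h1, h2⟩ | ⟨h1, h2⟩
      · exact hcut e.1 h1 e.2 ((hmem12 _ (hRS heR.2)).resolve_left h2)
      · rw [dist_comm e.1 e.2]
        exact hcut e.2 h1 e.1 ((hmem12 _ (hRS heR.1)).resolve_left h2)
    have hfin : dist h.1 h.2 ≤ btCost R := hdh.trans (hTRd e heTR)
    exact max_le (le_max_of_le_left (hbt1.trans hfin))
      (le_max_of_le_left (hbt2.trans hfin))
  · rw [not_and_or] at hcase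
    push_neg at hcase
    rcases hcase with hcase | hcase
    · -- R avoids H₁, so R = H₂ and B = H₁
      have hστ : ∀ i, σ i = !(τ i) := by
        intro i
        by_contra hne
        have hst : σ i = τ i := by
          have := hbool (σ i) (!(τ i)) hne
          rwa [Bool.not_not] at this
        have hmem : pts (i, σ i) ∈ R := Finset.mem_image_of_mem _ (Finset.mem_univ _)
        exact hcase _ hmem (hst ▸ (hkey i).1)
      have hReq : R = H₂ := by
        rw [hR, hH2eq]
        exact Finset.image_congr (fun i _ => by rw [hστ i])
      have hBeq : B = H₁ := by
        rw [hB, hH1eq]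
        refine Finset.image_congr (fun i _ => ?_)
        rw [hστ i, Bool.not_not]
      rw [hReq, hBeq, max_comm]
    · -- R avoids H₂, so R = H₁ and B = H₂
      have hστ : ∀ i, σ i = τ i := by
        intro i
        by_contra hne
        have hst : σ i = !(τ i) := hbool _ _ hne
        have hmem : pts (i, σ i) ∈ R := Finset.mem_image_of_mem _ (Finset.mem_univ _)
        exact hcase _ hmem (hst ▸ (hkey i).2)
      have hReq : R = H₁ := by
        rw [hR, hH1eq]
        exact Finset.image_congr (fun i _ => by rw [hστ i])
      have hBeq : B = H₂ := by
        rw [hB, hH2eq]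
        exact Finset.image_congr (fun i _ => by rw [hστ i])
      rw [hReq, hBeq]
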